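/- Let γ ∈ (0,1) and let g : ℕ → ℕ satisfy g(N) = o(N). Then the quantity Σ_{k=0}^{g(N)−1} γ^{N−k} · C(N, N−k) is at most (γ^{N/g(N) − 1} · N)^{g(N)}, and in particular tends to 0 as N → ∞. -/

import Mathlib

open Filter

private lemma aux_geom (N m : ℕ) (h2 : 2 ≤ N) :
    ∑ k ∈ Finset.range m, N ^ k ≤ N ^ m := by
  induction m with
  | zero => simp
  | succ m ih =>
    rw [Finset.sum_range_succ, pow_succ]
    have h := Nat.one_le_two_pow (n := m)
    nlinarith [Nat.one_le_two_pow (n := m), pow_pos (show 0 < N by omega) m]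

private lemma bound1 (γ : ℝ) (hγ0 : 0 < γ) (hγ1 : γ < 1) (N m : ℕ)
    (hm1 : 1 ≤ m) (hm : m ≤ N) :
    ∑ k ∈ Finset.range m, γ ^ (N - k) * (N.choose (N - k) : ℝ) ≤
      γ ^ (N - m) * (N : ℝ) ^ m := by
  have h1 : ∑ k ∈ Finset.range m, γ ^ (N - k) * (N.choose (N - k) : ℝ) ≤
      ∑ k ∈ Finset.range m, γ ^ (N - m + 1) * (N : ℝ) ^ k := by
    refine Finset.sum_le_sum fun k hk => ?_
    rw [Finset.mem_range] at hk
    have hkN : k ≤ N := le_trans hk.le hm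
    rw [Nat.choose_symm hkN]
    refine mul_le_mul ?_ ?_ (by positivity) (by positivity)
    · exact pow_le_pow_of_le_one hγ0.le hγ1.le (by omega)
    · exact_mod_cast Nat.choose_le_pow N k
  have h2 : ∑ k ∈ Finset.range m, γ ^ (N - m + 1) * (N : ℝ) ^ k
      = γ ^ (N - m) * (γ * ∑ k ∈ Finset.range m, (N : ℝ) ^ k) := by
    rw [← Finset.mul_sum, pow_succ]; ring
  have h3 : γ * ∑ k ∈ Finset.range m, (N : ℝ) ^ k ≤ (N : ℝ) ^ m := by
    rcases Nat.lt_or_ge N 2 with hN | hN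
    · have hN1 : N = 1 := by omega
      have hm1' : m = 1 := by omega
      subst hN1; subst hm1'
      simp; linarith
    · calc γ * ∑ k ∈ Finset.range m, (N : ℝ) ^ k
          ≤ 1 * ∑ k ∈ Finset.range m, (N : ℝ) ^ k := by
            refine mul_le_mul_of_nonneg_right hγ1.le ?_
            exact Finset.sum_nonneg fun k _ => by positivity
        _ = ∑ k ∈ Finset.range m, (N : ℝ) ^ k := one_mul _
        _ ≤ (N : ℝ) ^ m := by exact_mod_cast aux_geom N m hN
  calc ∑ k ∈ Finset.range m, γ ^ (N - k) * (N.choose (N - k) : ℝ)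
      ≤ γ ^ (N - m) * (γ * ∑ k ∈ Finset.range m, (N : ℝ) ^ k) := h2 ▸ h1
    _ ≤ γ ^ (N - m) * (N : ℝ) ^ m :=
        mul_le_mul_of_nonneg_left h3 (by positivity)

private lemma bound2 (γ : ℝ) (hγ0 : 0 < γ) (hγ1 : γ < 1) (N m : ℕ)
    (hN : 1 ≤ N) (hm1 : 1 ≤ m) (hm : m ≤ N) :
    ∑ k ∈ Finset.range m, γ ^ (N - k) * (N.choose (N - k) : ℝ) ≤
      Real.exp (((N : ℝ) - m) * Real.log γ + m * Real.log ((N : ℝ) / m) + m) := by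
  have hN0 : (0 : ℝ) < N := by exact_mod_cast hN
  have hm0 : (0 : ℝ) < m := by exact_mod_cast hm1
  set t : ℝ := (m : ℝ) / N with ht
  have ht0 : 0 < t := by positivity
  have ht1 : t ≤ 1 := by
    rw [ht, div_le_one hN0]; exact_mod_cast hm
  -- Step 1: S ≤ γ^(N-m) * ∑ C(N,k)
  have h1 : ∑ k ∈ Finset.range m, γ ^ (N - k) * (N.choose (N - k) : ℝ) ≤
      γ ^ (N - m) * ∑ k ∈ Finset.range m, (N.choose k : ℝ) := by
    rw [Finset.mul_sum]
    refine Finset.sum_le_sum fun k hk => ?_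
    rw [Finset.mem_range] at hk
    have hkN : k ≤ N := le_trans hk.le hm
    rw [Nat.choose_symm hkN]
    exact mul_le_mul_of_nonneg_right
      (pow_le_pow_of_le_one hγ0.le hγ1.le (by omega)) (by positivity)
  -- Step 2: ∑_{k<m} C(N,k) ≤ (t+1)^N / t^m
  have h2 : ∑ k ∈ Finset.range m, (N.choose k : ℝ) ≤ (t + 1) ^ N / t ^ m := by
    rw [le_div_iff₀ (pow_pos ht0 m)]
    calc (∑ k ∈ Finset.range m, (N.choose k : ℝ)) * t ^ m
        = ∑ k ∈ Finset.range m, (N.choose k : ℝ) * t ^ m := by rw [Finset.sum_mul]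
      _ ≤ ∑ k ∈ Finset.range m, t ^ k * (N.choose k : ℝ) := by
          refine Finset.sum_le_sum fun k hk => ?_
          rw [Finset.mem_range] at hk
          rw [mul_comm ((N.choose k : ℝ))]
          exact mul_le_mul_of_nonneg_right
            (pow_le_pow_of_le_one ht0.le ht1 hk.le) (by positivity)
      _ ≤ ∑ k ∈ Finset.range (N + 1), t ^ k * (N.choose k : ℝ) := by
          refine Finset.sum_le_sum_of_subset_of_nonneg
            (Finset.range_subset_range.mpr (by omega)) fun i _ _ => by positivity
      _ = (t + 1) ^ N := by
          rw [add_pow t 1 N]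
          exact Finset.sum_congr rfl fun k _ => by ring
  -- exponential rewrites
  have g1 : γ ^ (N - m) = Real.exp (((N : ℝ) - m) * Real.log γ) := by
    rw [← Real.exp_log (pow_pos hγ0 (N - m)), Real.log_pow]
    congr 1
    rw [Nat.cast_sub hm]
  have g2 : (t + 1) ^ N ≤ Real.exp m := by
    calc (t + 1) ^ N ≤ (Real.exp t) ^ N := by
          refine pow_le_pow_left₀ (by positivity) ?_ N
          linarith [Real.add_one_le_exp t]
      _ = Real.exp ((N : ℝ) * t) := (Real.exp_nat_mul t N).symm
      _ = Real.exp m := by rw [ht, mul_div_cancel₀ _ hN0.ne']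
  have g3 : (1 : ℝ) / t ^ m = Real.exp ((m : ℝ) * Real.log ((N : ℝ) / m)) := by
    have hlog : Real.log ((N : ℝ) / m) = - Real.log t := by
      rw [← Real.log_inv, ht, inv_div]
    rw [hlog, ← Real.exp_log (pow_pos ht0 m), Real.log_pow, one_div, ← Real.exp_neg]
    ring_nf
  calc ∑ k ∈ Finset.range m, γ ^ (N - k) * (N.choose (N - k) : ℝ)
      ≤ γ ^ (N - m) * ((t + 1) ^ N / t ^ m) :=
        le_trans h1 (mul_le_mul_of_nonneg_left h2 (by positivity))
    _ = γ ^ (N - m) * ((t + 1) ^ N * (1 / t ^ m)) := by ring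
    _ ≤ Real.exp (((N : ℝ) - m) * Real.log γ) *
        (Real.exp m * Real.exp ((m : ℝ) * Real.log ((N : ℝ) / m))) := by
        rw [g1, g3]
        refine mul_le_mul_of_nonneg_left ?_ (Real.exp_pos _).le
        exact mul_le_mul_of_nonneg_right g2 (Real.exp_pos _).le
    _ = Real.exp (((N : ℝ) - m) * Real.log γ + m * Real.log ((N : ℝ) / m) + m) := by
        rw [← Real.exp_add, ← Real.exp_add]
        ring_nf

/-- for `γ ∈ (0,1)` and `g(N) = o(N)`, the sum
`∑_{k=0}^{g(N)−1} γ^{N−k}·C(N, N−k)` is at most `(γ^{N/g(N) − 1}·N)^{g(N)}`, and in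
particular tends to `0` as `N → ∞`. -/
theorem stmt11 (γ : ℝ) (hγ0 : 0 < γ) (hγ1 : γ < 1) (g : ℕ → ℕ)
    (ho : Tendsto (fun N => (g N : ℝ) / (N : ℝ)) atTop (nhds 0)) :
    (∀ N : ℕ, g N ≤ N →
      ∑ k ∈ Finset.range (g N), γ ^ (N - k) * (N.choose (N - k) : ℝ) ≤
        (γ ^ (((N : ℝ) / (g N : ℝ)) - 1) * (N : ℝ)) ^ (g N)) ∧
    Tendsto (fun N => ∑ k ∈ Finset.range (g N), γ ^ (N - k) * (N.choose (N - k) : ℝ))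
      atTop (nhds 0) := by
  have hlogγ : Real.log γ < 0 := Real.log_neg hγ0 hγ1
  constructor
  · intro N hgN
    rcases Nat.eq_zero_or_pos (g N) with h0 | hpos
    · simp [h0]
    · have hrw : (γ ^ (((N : ℝ) / (g N : ℝ)) - 1) * (N : ℝ)) ^ (g N)
          = γ ^ (N - g N) * (N : ℝ) ^ (g N) := by
        have hm0 : ((g N : ℝ)) ≠ 0 := by positivity
        rw [mul_pow]
        congr 1
        rw [← Real.rpow_natCast (γ ^ (((N : ℝ) / (g N : ℝ)) - 1)) (g N),
          ← Real.rpow_natCast γ (N - g N), ← Real.rpow_mul hγ0.le]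
        congr 1
        rw [Nat.cast_sub hgN]
        field_simp
      rw [hrw]
      exact bound1 γ hγ0 hγ1 N (g N) hpos hgN
  · -- tendsto part
    set F : ℕ → ℝ := fun N =>
      ((N : ℝ) - g N) * Real.log γ + (g N : ℝ) * Real.log ((N : ℝ) / g N) + g N with hF
    have hc : Tendsto (fun N => (1 - (g N : ℝ) / N) * Real.log γ -
        ((g N : ℝ) / N) * Real.log ((g N : ℝ) / N) + (g N : ℝ) / N)
        atTop (nhds (Real.log γ)) := by
      have h1 : Tendsto (fun N => ((g N : ℝ) / N) * Real.log ((g N : ℝ) / N))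
          atTop (nhds 0) := by
        have := (Real.continuous_mul_log.tendsto 0).comp ho
        simpa [Function.comp_def] using this
      have h2 : Tendsto (fun N => (1 - (g N : ℝ) / N) * Real.log γ)
          atTop (nhds (Real.log γ)) := by
        have := (tendsto_const_nhds (x := (1 : ℝ)) (f := atTop)).sub ho
        have := this.mul_const (Real.log γ)
        simpa using this
      simpa using (h2.sub h1).add ho
    have hev : ∀ᶠ N in atTop, (1 - (g N : ℝ) / N) * Real.log γ -
        ((g N : ℝ) / N) * Real.log ((g N : ℝ) / N) + (g N : ℝ) / N
          < Real.log γ / 2 :=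
      hc.eventually_lt_const (by linarith)
    have hFbot : Tendsto F atTop atBot := by
      have hlin : Tendsto (fun N : ℕ => (N : ℝ) * (Real.log γ / 2)) atTop atBot :=
        tendsto_natCast_atTop_atTop.atTop_mul_const_of_neg (by linarith)
      refine tendsto_atBot_mono' atTop ?_ hlin
      filter_upwards [hev, eventually_ge_atTop 1] with N hN hN1
      have hN0 : (N : ℝ) ≠ 0 := by positivity
      have hid : F N = (N : ℝ) * ((1 - (g N : ℝ) / N) * Real.log γ -
          ((g N : ℝ) / N) * Real.log ((g N : ℝ) / N) + (g N : ℝ) / N) := by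
        have hlog : Real.log ((N : ℝ) / g N) = - Real.log ((g N : ℝ) / N) := by
          rw [← Real.log_inv, inv_div]
        rw [hF]
        simp only [hlog]
        field_simp
        ring
      rw [hid]
      have hNpos : (0 : ℝ) ≤ (N : ℝ) := by positivity
      exact mul_le_mul_of_nonneg_left hN.le hNpos
    have hUlim : Tendsto (fun N => Real.exp (F N)) atTop (nhds 0) :=
      Real.tendsto_exp_atBot.comp hFbot
    have hgN : ∀ᶠ N in atTop, g N ≤ N := by
      filter_upwards [ho.eventually_lt_const one_pos, eventually_ge_atTop 1]
        with N h1 hN1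
      have hN0 : (0 : ℝ) < N := by exact_mod_cast hN1
      have := (div_lt_one hN0).mp h1
      exact_mod_cast this.le
    refine tendsto_of_tendsto_of_tendsto_of_le_of_le' tendsto_const_nhds hUlim ?_ ?_
    · filter_upwards with N
      exact Finset.sum_nonneg fun k _ => by positivity
    · filter_upwards [hgN, eventually_ge_atTop 1] with N hgN' hN1
      rcases Nat.eq_zero_or_pos (g N) with h0 | hpos
      · simp [h0]
        exact (Real.exp_pos _).le
      · exact bound2 γ hγ0 hγ1 N (g N) hN1 hpos hgN'
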